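/- The generalized Markov measure M := Φ(μ), restricted to the Borel σ-algebra of Σ, coincides with the unique shift-invariant Borel probability measure M̄ determined on cylinders by M̄(_m[e_m,...,e_n]) = ∫ p_{e_m}(x) ⋯ p_{e_n}(w_{e_{n-1}}∘⋯∘w_{e_m}x) dμ(x). -/

import Mathlib

open MeasureTheory ENNReal Filter

/-- A contractive Markov system on a metric space `K` with vertex type `V` and edge type `E`. -/
structure CMS (E V K : Type*) [Fintype E] [MetricSpace K] [MeasurableSpace K] where
  i : E → V
  t : E → V
  Ks : V → Set K
  w : E → K → K
  p : E → K → ℝ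
  a : ℝ
  ha0 : 0 < a
  ha1 : a < 1
  Ks_nonempty : ∀ v, (Ks v).Nonempty
  Ks_meas : ∀ v, MeasurableSet (Ks v)
  Ks_disj : ∀ v v', v ≠ v' → Disjoint (Ks v) (Ks v')
  Ks_cover : ∀ x : K, ∃ v, x ∈ Ks v
  w_meas : ∀ e, Measurable (w e)
  p_meas : ∀ e, Measurable (p e)
  p_nonneg : ∀ e x, 0 ≤ p e x
  p_sum : ∀ x : K, ∑ e, p e x = 1
  p_zero : ∀ e, ∀ x ∉ Ks (i e), p e x = 0
  w_maps : ∀ e, Set.MapsTo (w e) (Ks (i e)) (Ks (t e))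
  contractive : ∀ v, ∀ x ∈ Ks v, ∀ y ∈ Ks v,
      ∑ e, p e x * dist (w e x) (w e y) ≤ a * dist x y

variable {E V K : Type*} [Fintype E] [MetricSpace K] [MeasurableSpace K]

/-- `S.orbit e m x j = w_{e_{m+j}} ∘ ⋯ ∘ w_{e_m} (x)`. -/
def CMS.orbit (S : CMS E V K) (e : ℤ → E) (m : ℤ) (x : K) : ℕ → K
  | 0 => S.w (e m) x
  | j + 1 => S.w (e (m + j + 1)) (S.orbit e m x j)

/-- `S.pathProb e m x j = p_{e_m}(x) p_{e_{m+1}}(w_{e_m}x) ⋯ p_{e_{m+j}}(w_{e_{m+j-1}}∘⋯∘w_{e_m}x)`. -/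
def CMS.pathProb (S : CMS E V K) (e : ℤ → E) (m : ℤ) (x : K) : ℕ → ℝ
  | 0 => S.p (e m) x
  | j + 1 => S.pathProb e m x j * S.p (e (m + j + 1)) (S.orbit e m x j)

/-- The σ-algebra `𝒜_m` on `Σ = E^ℤ` generated by the coordinates with index `≥ m`. -/
def Am (E : Type*) (m : ℤ) : MeasurableSpace (ℤ → E) :=
  ⨆ (i : ℤ) (_ : m ≤ i), MeasurableSpace.comap (fun σ => σ i) ⊤

/-- The cylinder `_m[e_m, …, e_{m+j}]`. -/
def cyl (m : ℤ) (j : ℕ) (e : ℤ → E) : Set (ℤ → E) :=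
  {σ | ∀ k : ℤ, m ≤ k → k ≤ m + j → σ k = e k}

/-- `P` is the family of Markov measures `P^m_x` on `(Σ, 𝒜_m)` of the CMS `S`. -/
def IsKernel (S : CMS E V K) (P : ∀ m : ℤ, K → @Measure (ℤ → E) (Am E m)) : Prop :=
  (∀ (m : ℤ) (x : K), @IsProbabilityMeasure _ (Am E m) (P m x)) ∧
  ∀ (m : ℤ) (x : K) (e : ℤ → E) (j : ℕ),
    P m x (cyl m j e) = ENNReal.ofReal (S.pathProb e m x j)

/-- The `m`-th lift `Φ_m(ν)(A) = ∫ P^m_x(A) dν(x)`. -/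
noncomputable def liftMeas (P : ∀ m : ℤ, K → @Measure (ℤ → E) (Am E m))
    (m : ℤ) (ν : Measure K) (A : Set (ℤ → E)) : ℝ≥0∞ :=
  ∫⁻ x, P m x A ∂ν

/-- The lift outer measure `Φ(ν)`, via coverings `B ⊆ ⋃_{m ≤ 0} A_m`, `A_m ∈ 𝒜_m` (indexed by `m = -n`). -/
noncomputable def PhiM (P : ∀ m : ℤ, K → @Measure (ℤ → E) (Am E m))
    (ν : Measure K) (B : Set (ℤ → E)) : ℝ≥0∞ :=
  ⨅ (A : ℕ → Set (ℤ → E)) (_ : ∀ n : ℕ, MeasurableSet[Am E (-(n : ℤ))] (A n))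
    (_ : B ⊆ ⋃ n, A n), ∑' n : ℕ, liftMeas P (-(n : ℤ)) ν (A n)

/-- `Y^{x_1…x_N}_{m0}(σ) = w_{σ_0}∘⋯∘w_{σ_m}(x_{i(σ_m)})`. -/
noncomputable def CMS.Y (S : CMS E V K) (xs : V → K) (m : ℤ) (σ : ℤ → E) : K :=
  S.orbit σ m (xs (S.i (σ m))) (-m).toNat

/-- The uniform measure `(1/N) ∑_i δ_{x_i}`. -/
noncomputable def unif [Fintype V] (xs : V → K) : Measure K :=
  ((Fintype.card V : ℝ≥0∞))⁻¹ • ∑ v : V, Measure.dirac (xs v)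

/-- The measure `P^m_{x_1…x_N} = Φ_m((1/N)∑δ_{x_i}) = (1/N)∑_i P^m_{x_i}`. -/
noncomputable def PmMix [Fintype V] (P : ∀ m : ℤ, K → @Measure (ℤ → E) (Am E m))
    (xs : V → K) (m : ℤ) : @Measure (ℤ → E) (Am E m) :=
  ((Fintype.card V : ℝ≥0∞))⁻¹ • ∑ v : V, P m (xs v)

/-- The product (Borel) σ-algebra on `Σ = E^ℤ`, generated by the cylinders. -/
def sigAll (E : Type*) : MeasurableSpace (ℤ → E) :=
  @MeasurableSpace.pi ℤ (fun _ => E) (fun _ => ⊤)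

/-- The left shift on `Σ = E^ℤ`. -/
def shiftMap {E : Type*} (σ : ℤ → E) : ℤ → E := fun n => σ (n + 1)


section Aux13

open MeasurableSpace Set

lemma Am_mono {m m' : ℤ} (h : m' ≤ m) : Am E m ≤ Am E m' :=
  iSup₂_le fun i hi => le_iSup₂_of_le i (h.trans hi) le_rfl

lemma comap_le_Am {m i : ℤ} (h : m ≤ i) :
    MeasurableSpace.comap (fun σ : ℤ → E => σ i) ⊤ ≤ Am E m :=
  le_iSup₂_of_le i h le_rfl

lemma sigAll_eq : sigAll E = ⨆ i : ℤ, MeasurableSpace.comap (fun σ : ℤ → E => σ i) ⊤ := rfl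

lemma Am_le_sigAll (m : ℤ) : Am E m ≤ sigAll E := by
  rw [sigAll_eq]
  exact iSup₂_le fun i _ => le_iSup
    (fun i : ℤ => MeasurableSpace.comap (fun σ : ℤ → E => σ i) ⊤) i

lemma measurableSet_eval {m i : ℤ} (h : m ≤ i) (s : Set E) :
    MeasurableSet[Am E m] ((fun σ : ℤ → E => σ i) ⁻¹' s) :=
  comap_le_Am h _ ⟨s, trivial, rfl⟩

lemma cyl_eq_iInter (m : ℤ) (j : ℕ) (e : ℤ → E) :
    cyl m j e = ⋂ (k : ℤ) (_ : m ≤ k) (_ : k ≤ m + j), (fun σ : ℤ → E => σ k) ⁻¹' {e k} := by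
  ext σ; simp [cyl]

lemma cyl_measurable (m : ℤ) (j : ℕ) (e : ℤ → E) : MeasurableSet[Am E m] (cyl m j e) := by
  rw [cyl_eq_iInter]
  exact MeasurableSet.iInter fun k => MeasurableSet.iInter fun hk =>
    MeasurableSet.iInter fun _ => measurableSet_eval hk _

/-- The cylinders starting at `m`. -/
def cylSet (E : Type*) (m : ℤ) : Set (Set (ℤ → E)) := {A | ∃ j e, A = cyl m j e}

lemma cyl_subset {m : ℤ} {j j' : ℕ} {e e' : ℤ → E} (hjj : j ≤ j') {σ : ℤ → E}
    (h1 : σ ∈ cyl m j e) (h2 : σ ∈ cyl m j' e') : cyl m j' e' ⊆ cyl m j e := by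
  intro τ hτ k hk1 hk2
  have hk2' : k ≤ m + (j' : ℤ) := by omega
  rw [hτ k hk1 hk2', ← h2 k hk1 hk2', h1 k hk1 hk2]

lemma isPiSystem_cylSet (m : ℤ) : IsPiSystem (cylSet E m) := by
  rintro _ ⟨j, e, rfl⟩ _ ⟨j', e', rfl⟩ ⟨σ, h1, h2⟩
  rcases le_total j j' with h | h
  · rw [Set.inter_eq_self_of_subset_right (cyl_subset h h1 h2)]
    exact ⟨j', e', rfl⟩
  · rw [Set.inter_eq_self_of_subset_left (cyl_subset h h2 h1)]
    exact ⟨j, e, rfl⟩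

lemma generateFrom_cylSet (m : ℤ) :
    Am E m = MeasurableSpace.generateFrom (cylSet E m) := by
  refine le_antisymm (iSup₂_le fun i hi => ?_) (MeasurableSpace.generateFrom_le ?_)
  · rintro _ ⟨s, -, rfl⟩
    set j : ℕ := (i - m).toNat with hj
    have hij : m + (j : ℤ) = i := by omega
    have key : (fun σ : ℤ → E => σ i) ⁻¹' s =
        ⋃ (g : Fin (j + 1) → E) (_ : g (Fin.last j) ∈ s),
          cyl m j (fun k => if h : (k - m).toNat < j + 1 then g ⟨(k - m).toNat, h⟩
            else g (Fin.last j)) := by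
      ext σ
      constructor
      · intro hσ
        refine Set.mem_iUnion.2 ⟨fun t => σ (m + (t.1 : ℤ)), Set.mem_iUnion.2 ⟨?_, ?_⟩⟩
        · simpa [Fin.last, hij] using hσ
        · intro k hk1 hk2
          have h1 : (k - m).toNat < j + 1 := by omega
          simp only [h1, dif_pos]
          congr 1
          omega
      · intro hσ
        obtain ⟨g, hg⟩ := Set.mem_iUnion.1 hσ
        obtain ⟨hgs, hcyl⟩ := Set.mem_iUnion.1 hg
        have h2 := hcyl i (by omega) (by omega)
        have h1 : (i - m).toNat < j + 1 := by omega
        have hfin : (⟨(i - m).toNat, h1⟩ : Fin (j + 1)) = Fin.last j := by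
          apply Fin.ext
          simp [Fin.last, hj]
        show σ i ∈ s
        rw [h2]
        simp only [h1, dif_pos, hfin]
        exact hgs
    rw [key]
    exact MeasurableSet.iUnion fun g => MeasurableSet.iUnion fun _ =>
      MeasurableSpace.measurableSet_generateFrom ⟨j, _, rfl⟩
  · rintro _ ⟨j, e, rfl⟩
    exact cyl_measurable m j e

lemma orbit_meas (S : CMS E V K) (e : ℤ → E) (m : ℤ) (j : ℕ) :
    Measurable fun x => S.orbit e m x j := by
  induction j with
  | zero => exact S.w_meas (e m)
  | succ j ih => exact (S.w_meas _).comp ih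

lemma pathProb_meas (S : CMS E V K) (e : ℤ → E) (m : ℤ) (j : ℕ) :
    Measurable fun x => S.pathProb e m x j := by
  induction j with
  | zero => exact S.p_meas (e m)
  | succ j ih => exact ih.mul ((S.p_meas _).comp (orbit_meas S e m j))

lemma kernel_meas {S : CMS E V K} {P : ∀ m : ℤ, K → @Measure (ℤ → E) (Am E m)}
    (hP : IsKernel S P) (m : ℤ) :
    ∀ ⦃A : Set (ℤ → E)⦄, MeasurableSet[Am E m] A → Measurable fun x => P m x A := by
  refine MeasurableSpace.induction_on_inter (m := Am E m)
    (C := fun A _ => Measurable fun x => P m x A) (s := cylSet E m)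
    (generateFrom_cylSet m) (isPiSystem_cylSet m) ?_ ?_ ?_ ?_
  · simp only [measure_empty]
    exact measurable_const
  · rintro _ ⟨j, e, rfl⟩
    simp only [hP.2]
    exact ENNReal.measurable_ofReal.comp (pathProb_meas S e m j)
  · intro t ht hC
    have h1 : ∀ x, P m x tᶜ = 1 - P m x t := by
      intro x
      haveI := hP.1 m x
      rw [measure_compl ht (measure_ne_top _ _), measure_univ]
    simp only [h1]
    exact measurable_const.sub hC
  · intro f hd hmeas hC
    have h1 : ∀ x, P m x (⋃ i, f i) = ∑' i, P m x (f i) := fun x =>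
      measure_iUnion hd hmeas
    simp only [h1]
    exact Measurable.ennreal_tsum hC

lemma liftMeas_eq {S : CMS E V K} {P : ∀ m : ℤ, K → @Measure (ℤ → E) (Am E m)}
    (hP : IsKernel S P) (μ : Measure K) [IsProbabilityMeasure μ]
    (Mbar : @Measure (ℤ → E) (sigAll E)) (hprob : @IsProbabilityMeasure _ (sigAll E) Mbar)
    (hcyl : ∀ (m : ℤ) (j : ℕ) (e : ℤ → E),
      Mbar (cyl m j e) = ∫⁻ x, ENNReal.ofReal (S.pathProb e m x j) ∂μ)
    (m : ℤ) {A : Set (ℤ → E)} (hA : MeasurableSet[Am E m] A) :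
    liftMeas P m μ A = Mbar A := by
  have hmeas := kernel_meas (E := E) hP m
  set ν : @Measure (ℤ → E) (Am E m) :=
    @Measure.ofMeasurable _ (Am E m) (fun A _ => ∫⁻ x, P m x A ∂μ)
      (by simp) (fun f hf hd => by
        have h1 : ∀ x, P m x (⋃ i, f i) = ∑' i, P m x (f i) := fun x =>
          measure_iUnion hd hf
        simp only [h1]
        exact lintegral_tsum fun i => (hmeas (hf i)).aemeasurable) with hν
  have hνa : ∀ ⦃B : Set (ℤ → E)⦄, MeasurableSet[Am E m] B →
      ν B = ∫⁻ x, P m x B ∂μ := fun B hB =>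
    @Measure.ofMeasurable_apply _ (Am E m) _ _ _ B hB
  have hνuniv : ν Set.univ = 1 := by
    rw [hνa MeasurableSet.univ]
    have h1 : ∀ x : K, P m x Set.univ = 1 := fun x => by
      haveI := hP.1 m x
      exact measure_univ
    simp only [h1, lintegral_one, measure_univ]
  haveI : @IsFiniteMeasure _ (Am E m) ν := by
    refine @IsFiniteMeasure.mk _ (Am E m) ν ?_
    rw [hνuniv]
    exact one_lt_top
  have key : ν = Mbar.trim (Am_le_sigAll m) := by
    refine ext_of_generate_finite (cylSet E m) (generateFrom_cylSet m)
      (isPiSystem_cylSet m) ?_ ?_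
    · rintro _ ⟨j, e, rfl⟩
      rw [hνa (cyl_measurable m j e),
        trim_measurableSet_eq (Am_le_sigAll m) (cyl_measurable m j e), hcyl]
      exact lintegral_congr fun x => hP.2 m x e j
    · rw [hνuniv, trim_measurableSet_eq (Am_le_sigAll m) MeasurableSet.univ,
        hprob.measure_univ]
  show ∫⁻ x, P m x A ∂μ = Mbar A
  rw [← hνa hA, key, trim_measurableSet_eq (Am_le_sigAll m) hA]

end Aux13

/-- the generalized Markov measure `M = Φ(μ)` coincides on the Borel
σ-algebra of `Σ` with the shift-invariant probability measure `M̄` determined on cylinders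
by `M̄(_m[e_m,…,e_n]) = ∫ p_{e_m}(x)⋯p_{e_n}(w_{e_{n-1}}∘⋯∘w_{e_m}x) dμ(x)`. -/
theorem statement13 {E V K : Type*} [Fintype E] [MetricSpace K] [CompleteSpace K]
    [MeasurableSpace K] [BorelSpace K] (S : CMS E V K)
    (P : ∀ m : ℤ, K → @Measure (ℤ → E) (Am E m)) (hP : IsKernel S P)
    (μ : Measure K) [IsProbabilityMeasure μ]
    (hinv : ∀ g : K → ℝ≥0∞, Measurable g →
      ∫⁻ x, g x ∂μ = ∑ e : E, ∫⁻ x, ENNReal.ofReal (S.p e x) * g (S.w e x) ∂μ)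
    (Mbar : @Measure (ℤ → E) (sigAll E)) (hprob : @IsProbabilityMeasure _ (sigAll E) Mbar)
    (hcyl : ∀ (m : ℤ) (j : ℕ) (e : ℤ → E),
      Mbar (cyl m j e) = ∫⁻ x, ENNReal.ofReal (S.pathProb e m x j) ∂μ)
    (hshift : @Measure.map (ℤ → E) (ℤ → E) (sigAll E) (sigAll E) shiftMap Mbar = Mbar) :
    ∀ B : Set (ℤ → E), MeasurableSet[sigAll E] B → PhiM P μ B = Mbar B := by
  classical
  intro B hB
  have LA : ∀ (m : ℤ) {A : Set (ℤ → E)}, MeasurableSet[Am E m] A →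
      liftMeas P m μ A = Mbar A := fun m A hA => liftMeas_eq hP μ Mbar hprob hcyl m hA
  set f : Set (ℤ → E) → ℝ≥0∞ :=
    fun A => if ∃ m : ℤ, MeasurableSet[Am E m] A then Mbar A else ⊤ with hf
  have hf0 : f ∅ = 0 := by
    have h : ∃ m : ℤ, MeasurableSet[Am E m] (∅ : Set (ℤ → E)) :=
      ⟨0, @MeasurableSet.empty _ (Am E 0)⟩
    simp only [hf]
    rw [if_pos h]
    exact measure_empty
  have hfval : ∀ {m : ℤ} {A : Set (ℤ → E)}, MeasurableSet[Am E m] A → f A = Mbar A :=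
    fun {m A} hA => if_pos ⟨m, hA⟩
  have hfge : ∀ A, Mbar A ≤ f A := fun A => by
    by_cases h : ∃ m : ℤ, MeasurableSet[Am E m] A
    · rw [hf]; simp only [if_pos h]; exact le_rfl
    · rw [hf]; simp only [if_neg h]; exact le_top
  -- every set in some `Am E m` is Carathéodory measurable for `ofFunction f`
  have hcarAm : ∀ (m : ℤ) (t : Set (ℤ → E)), MeasurableSet[Am E m] t →
      MeasurableSet[(OuterMeasure.ofFunction f hf0).caratheodory] t := by
    intro m t htm
    refine OuterMeasure.ofFunction_caratheodory fun T => ?_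
    by_cases hT : ∃ m' : ℤ, MeasurableSet[Am E m'] T
    · obtain ⟨m', hTm⟩ := hT
      have h1 : MeasurableSet[Am E (min m m')] (T ∩ t) :=
        MeasurableSet.inter (Am_mono (min_le_right m m') _ hTm)
          (Am_mono (min_le_left m m') _ htm)
      have h2 : MeasurableSet[Am E (min m m')] (T \ t) :=
        MeasurableSet.diff (Am_mono (min_le_right m m') _ hTm)
          (Am_mono (min_le_left m m') _ htm)
      rw [hfval h1, hfval h2, hfval hTm,
        measure_inter_add_diff T (Am_le_sigAll m _ htm)]
    · rw [hf]; simp only [if_neg hT]; exact le_top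
  have hcar : sigAll E ≤ (OuterMeasure.ofFunction f hf0).caratheodory := by
    rw [sigAll_eq]
    refine iSup_le fun i => fun u hu => ?_
    exact hcarAm i u (comap_le_Am le_rfl u hu)
  -- the Carathéodory restriction of `ofFunction f` coincides with `Mbar`
  have hOCU : ∀ (m : ℤ) (A : Set (ℤ → E)), MeasurableSet[Am E m] A →
      OuterMeasure.ofFunction f hf0 A = Mbar A := by
    intro m A hAm
    refine le_antisymm ((OuterMeasure.ofFunction_le A).trans_eq (hfval hAm)) ?_
    rw [OuterMeasure.ofFunction_apply]
    refine le_iInf fun t => le_iInf fun htA => ?_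
    calc Mbar A ≤ Mbar (⋃ n, t n) := measure_mono htA
      _ ≤ ∑' n, Mbar (t n) := measure_iUnion_le t
      _ ≤ ∑' n, f (t n) := ENNReal.tsum_le_tsum fun n => hfge (t n)
  have hMO : @OuterMeasure.toMeasure _ (sigAll E) (OuterMeasure.ofFunction f hf0) hcar
      = Mbar := by
    set CU : Set (Set (ℤ → E)) := {A | ∃ m : ℤ, MeasurableSet[Am E m] A} with hCU
    have hgen : sigAll E = MeasurableSpace.generateFrom CU := by
      refine le_antisymm ?_ (MeasurableSpace.generateFrom_le fun A hA => ?_)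
      · rw [sigAll_eq]
        refine iSup_le fun i => fun u hu => ?_
        exact MeasurableSpace.measurableSet_generateFrom ⟨i, comap_le_Am le_rfl u hu⟩
      · obtain ⟨m, hAm⟩ := hA
        exact Am_le_sigAll m _ hAm
    have hpi : IsPiSystem CU := by
      rintro u ⟨m1, h1⟩ v ⟨m2, h2⟩ -
      exact ⟨min m1 m2, MeasurableSet.inter (Am_mono (min_le_left m1 m2) _ h1)
        (Am_mono (min_le_right m1 m2) _ h2)⟩
    have hval : ∀ A ∈ CU,
        @OuterMeasure.toMeasure _ (sigAll E) (OuterMeasure.ofFunction f hf0) hcar A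
          = Mbar A := by
      rintro A ⟨m, hAm⟩
      rw [@toMeasure_apply _ (sigAll E) _ hcar _ (Am_le_sigAll m _ hAm)]
      exact hOCU m A hAm
    have huniv : @OuterMeasure.toMeasure _ (sigAll E) (OuterMeasure.ofFunction f hf0) hcar
        Set.univ = Mbar Set.univ := hval _ ⟨0, MeasurableSet.univ⟩
    haveI : @IsFiniteMeasure _ (sigAll E)
        (@OuterMeasure.toMeasure _ (sigAll E) (OuterMeasure.ofFunction f hf0) hcar) := by
      refine @IsFiniteMeasure.mk _ (sigAll E) _ ?_
      rw [huniv, hprob.measure_univ]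
      exact one_lt_top
    exact ext_of_generate_finite CU hgen hpi hval huniv
  have hOB : OuterMeasure.ofFunction f hf0 B = Mbar B := by
    rw [← @toMeasure_apply _ (sigAll E) _ hcar _ hB, hMO]
  -- `PhiM ≤ ofFunction f`
  have hle : PhiM P μ B ≤ OuterMeasure.ofFunction f hf0 B := by
    rw [OuterMeasure.ofFunction_apply]
    refine le_iInf fun t => le_iInf fun htB => ?_
    by_cases hall : ∀ n : ℕ, ∃ m : ℤ, MeasurableSet[Am E m] (t n)
    · choose ms hms using hall
      set g : ℕ → ℕ := fun n => n + ∑ i ∈ Finset.range (n + 1), (-(ms i)).toNat with hg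
      have hmono : StrictMono g := by
        refine strictMono_nat_of_lt_succ fun n => ?_
        have h1 : ∑ i ∈ Finset.range (n + 1), (-(ms i)).toNat
            ≤ ∑ i ∈ Finset.range (n + 1 + 1), (-(ms i)).toNat :=
          Finset.sum_le_sum_of_subset (Finset.range_subset_range.2 (by omega))
        simp only [hg]
        omega
      have hgr : ∀ n, (-(ms n)).toNat ≤ g n := fun n => by
        have h1 : (-(ms n)).toNat ≤ ∑ i ∈ Finset.range (n + 1), (-(ms i)).toNat :=
          Finset.single_le_sum (f := fun i => (-(ms i)).toNat)
            (fun i _ => Nat.zero_le _) (Finset.self_mem_range_succ n)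
        simp only [hg]
        omega
      have hAms : ∀ n, MeasurableSet[Am E (-(g n : ℤ))] (t n) := fun n => by
        refine Am_mono ?_ _ (hms n)
        have h1 := hgr n
        omega
      set C : ℕ → Set (ℤ → E) := fun k => ⋃ (n : ℕ) (_ : g n = k), t n with hC
      have hCmeas : ∀ k : ℕ, MeasurableSet[Am E (-(k : ℤ))] (C k) := fun k =>
        MeasurableSet.iUnion fun n => MeasurableSet.iUnion fun hn => hn ▸ hAms n
      have hcov : B ⊆ ⋃ k, C k := htB.trans (Set.iUnion_subset fun n =>
        (Set.subset_iUnion₂ (s := fun n' (_ : g n' = g n) => t n') n rfl).trans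
          (Set.subset_iUnion C (g n)))
      have key1 : PhiM P μ B ≤ ∑' k : ℕ, liftMeas P (-(k : ℤ)) μ (C k) :=
        iInf_le_of_le C (iInf_le_of_le hCmeas (iInf_le_of_le hcov le_rfl))
      refine key1.trans (le_of_eq ?_)
      have hCg : ∀ n, C (g n) = t n := fun n => by
        refine Set.Subset.antisymm (Set.iUnion₂_subset fun n' hn' => ?_)
          (Set.subset_iUnion₂ (s := fun n' (_ : g n' = g n) => t n') n rfl)
        rw [hmono.injective hn']
      have hsupp : Function.support (fun k => Mbar (C k)) ⊆ Set.range g := by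
        intro k hk
        by_contra hkr
        apply hk
        have hCk : C k = ∅ := by
          refine Set.eq_empty_iff_forall_notMem.2 fun σ hσ => ?_
          obtain ⟨n, hgn, -⟩ := Set.mem_iUnion₂.1 hσ
          exact hkr ⟨n, hgn⟩
        show Mbar (C k) = 0
        rw [hCk]
        exact measure_empty
      calc ∑' k : ℕ, liftMeas P (-(k : ℤ)) μ (C k)
          = ∑' k : ℕ, Mbar (C k) := tsum_congr fun k => LA _ (hCmeas k)
        _ = ∑' n, Mbar (C (g n)) := (hmono.injective.tsum_eq hsupp).symm
        _ = ∑' n, f (t n) := tsum_congr fun n => by rw [hCg n, hfval (hms n)]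
    · obtain ⟨n, hn⟩ := not_forall.1 hall
      refine le_trans le_top (le_trans (le_of_eq ?_) (ENNReal.le_tsum n))
      rw [hf]
      simp only [if_neg hn]
  -- `ofFunction f ≤ PhiM`
  have hgeO : OuterMeasure.ofFunction f hf0 B ≤ PhiM P μ B := by
    refine le_iInf fun A => le_iInf fun hAms => le_iInf fun hcov => ?_
    have h1 : OuterMeasure.ofFunction f hf0 B ≤ ∑' n, f (A n) := by
      rw [OuterMeasure.ofFunction_apply]
      exact iInf_le_of_le A (iInf_le _ hcov)
    refine h1.trans (le_of_eq (tsum_congr fun n => ?_))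
    rw [hfval (hAms n)]
    exact (LA _ (hAms n)).symm
  exact le_antisymm (hle.trans hOB.le) (hOB ▸ hgeO)
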